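/- Let n, m be positive integers, let ρ > 0, let a ∈ ℝⁿ, let b ∈ ℝᵐ, and let R be an invertible n×n real matrix. Then the supremum over all Δ ∈ ℝ^{m×n} with ‖ΔR‖_F ≤ ρ of ‖Δa + b‖ equals ‖b‖ + ρ‖R⁻¹a‖. -/

import Mathlib

open Matrix
open scoped BigOperators

/-- Euclidean norm of a real vector. -/
noncomputable def euclNorm {k : ℕ} (v : Fin k → ℝ) : ℝ :=
  Real.sqrt (∑ i, (v i) ^ 2)

/-- Frobenius norm of a real matrix. -/
noncomputable def frobNorm {m n : ℕ} (A : Matrix (Fin m) (Fin n) ℝ) : ℝ :=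
  Real.sqrt (∑ i, ∑ j, (A i j) ^ 2)

lemma euclNorm_nonneg {k : ℕ} (v : Fin k → ℝ) : 0 ≤ euclNorm v :=
  Real.sqrt_nonneg _

lemma sum_sq_nonneg {k : ℕ} (v : Fin k → ℝ) : 0 ≤ ∑ i, (v i) ^ 2 :=
  Finset.sum_nonneg fun i _ => sq_nonneg _

lemma euclNorm_sq {k : ℕ} (v : Fin k → ℝ) : euclNorm v ^ 2 = ∑ i, (v i) ^ 2 :=
  Real.sq_sqrt (sum_sq_nonneg v)

lemma euclNorm_pos {k : ℕ} {v : Fin k → ℝ} (hv : v ≠ 0) : 0 < euclNorm v := by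
  apply Real.sqrt_pos.mpr
  obtain ⟨i, hi⟩ := Function.ne_iff.mp hv
  exact Finset.sum_pos' (fun j _ => sq_nonneg _)
    ⟨i, Finset.mem_univ i, pow_pos (abs_pos.mpr hi) 2 |>.trans_le (by rw [sq_abs])⟩

lemma euclNorm_smul {k : ℕ} (t : ℝ) (v : Fin k → ℝ) :
    euclNorm (t • v) = |t| * euclNorm v := by
  unfold euclNorm
  have : ∑ i, ((t • v) i) ^ 2 = t ^ 2 * ∑ i, (v i) ^ 2 := by
    rw [Finset.mul_sum]; congr 1; ext i; simp [mul_pow]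
  rw [this, Real.sqrt_mul (sq_nonneg t), Real.sqrt_sq_eq_abs]

lemma euclNorm_zero {k : ℕ} : euclNorm (0 : Fin k → ℝ) = 0 := by
  simp [euclNorm]

lemma euclNorm_add_le {k : ℕ} (x y : Fin k → ℝ) :
    euclNorm (x + y) ≤ euclNorm x + euclNorm y := by
  have hx : euclNorm x = ‖(WithLp.equiv 2 (Fin k → ℝ)).symm x‖ := by
    rw [EuclideanSpace.norm_eq]; simp [euclNorm, Real.norm_eq_abs, sq_abs]
  have hy : euclNorm y = ‖(WithLp.equiv 2 (Fin k → ℝ)).symm y‖ := by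
    rw [EuclideanSpace.norm_eq]; simp [euclNorm, Real.norm_eq_abs, sq_abs]
  have hxy : euclNorm (x + y) =
      ‖(WithLp.equiv 2 (Fin k → ℝ)).symm x + (WithLp.equiv 2 (Fin k → ℝ)).symm y‖ := by
    rw [EuclideanSpace.norm_eq]; simp [euclNorm, Real.norm_eq_abs, sq_abs]
  rw [hx, hy, hxy]
  exact norm_add_le _ _

lemma euclNorm_mulVec_le {p q : ℕ} (M : Matrix (Fin p) (Fin q) ℝ) (v : Fin q → ℝ) :
    euclNorm (M *ᵥ v) ≤ frobNorm M * euclNorm v := by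
  unfold euclNorm frobNorm
  rw [← Real.sqrt_mul (show (0:ℝ) ≤ ∑ i, ∑ j, M i j ^ 2 from Finset.sum_nonneg fun i _ => sum_sq_nonneg _)]
  apply Real.sqrt_le_sqrt
  rw [Finset.sum_mul]
  apply Finset.sum_le_sum
  intro i _
  calc (M *ᵥ v) i ^ 2 = (∑ j, M i j * v j) ^ 2 := by rfl
    _ ≤ (∑ j, M i j ^ 2) * (∑ j, v j ^ 2) :=
        Finset.sum_mul_sq_le_sq_mul_sq Finset.univ _ _

lemma frobNorm_smul {p q : ℕ} (t : ℝ) (A : Matrix (Fin p) (Fin q) ℝ) :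
    frobNorm (t • A) = |t| * frobNorm A := by
  unfold frobNorm
  have : ∑ i, ∑ j, ((t • A) i j) ^ 2 = t ^ 2 * ∑ i, ∑ j, (A i j) ^ 2 := by
    rw [Finset.mul_sum]
    congr 1; ext i
    rw [Finset.mul_sum]
    congr 1; ext j
    simp [mul_pow, mul_comm]
  rw [this, Real.sqrt_mul (sq_nonneg t), Real.sqrt_sq_eq_abs]

lemma frobNorm_vecMulVec {p q : ℕ} (u : Fin p → ℝ) (c : Fin q → ℝ) :
    frobNorm (vecMulVec u c) = euclNorm u * euclNorm c := by
  unfold frobNorm euclNorm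
  rw [← Real.sqrt_mul (sum_sq_nonneg u)]
  congr 1
  rw [Finset.sum_mul]
  congr 1; ext i
  rw [Finset.mul_sum]
  congr 1; ext j
  simp [vecMulVec, mul_pow]

/-- For any s ≥ 0 there is a unit vector u with ‖s•u + b‖ = ‖b‖ + s. -/
lemma exists_unit_dir {k : ℕ} (hk : 0 < k) (b : Fin k → ℝ) {s : ℝ} (hs : 0 ≤ s) :
    ∃ u : Fin k → ℝ, euclNorm u = 1 ∧ euclNorm (s • u + b) = euclNorm b + s := by
  by_cases hb : b = 0
  · have hsum : ∑ i : Fin k, (Pi.single (M := fun _ : Fin k => ℝ) ⟨0, hk⟩ 1) i ^ 2 = 1 := by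
      simp [Pi.single_apply, apply_ite (· ^ (2:ℕ))]
    have hunit : euclNorm (Pi.single (M := fun _ : Fin k => ℝ) ⟨0, hk⟩ 1) = 1 := by
      unfold euclNorm; rw [hsum, Real.sqrt_one]
    refine ⟨Pi.single (M := fun _ : Fin k => ℝ) ⟨0, hk⟩ 1, hunit, ?_⟩
    rw [hb, add_zero, euclNorm_smul, euclNorm_zero, zero_add, abs_of_nonneg hs,
      hunit, mul_one]
  · have hbpos : 0 < euclNorm b := euclNorm_pos hb
    refine ⟨(euclNorm b)⁻¹ • b, ?_, ?_⟩
    · rw [euclNorm_smul, abs_of_nonneg (by positivity), inv_mul_cancel₀ hbpos.ne']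
    · have : s • ((euclNorm b)⁻¹ • b) + b = (s * (euclNorm b)⁻¹ + 1) • b := by
        rw [smul_smul, add_smul, one_smul]
      rw [this, euclNorm_smul, abs_of_nonneg (by positivity), add_mul, one_mul,
        mul_assoc, inv_mul_cancel₀ hbpos.ne', mul_one, add_comm]

/-- Lemma 2: the supremum of ‖Δa + b‖ over {Δ : ‖ΔR‖_F ≤ ρ} equals
‖b‖ + ρ‖R⁻¹a‖. -/
theorem sup_robust_inner_problem
    (n m : ℕ) (hn : 0 < n) (hm : 0 < m)
    (ρ : ℝ) (hρ : 0 < ρ)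
    (a : Fin n → ℝ) (b : Fin m → ℝ)
    (R : Matrix (Fin n) (Fin n) ℝ) (hR : IsUnit R.det) :
    sSup ((fun Δ => euclNorm (Δ *ᵥ a + b)) ''
        {Δ : Matrix (Fin m) (Fin n) ℝ | frobNorm (Δ * R) ≤ ρ}) =
      euclNorm b + ρ * euclNorm (R⁻¹ *ᵥ a) := by
  set c : Fin n → ℝ := R⁻¹ *ᵥ a with hc
  have hRRinv : R * R⁻¹ = 1 := Matrix.mul_nonsing_inv R hR
  have hRinvR : R⁻¹ * R = 1 := Matrix.nonsing_inv_mul R hR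
  -- key rewriting: Δ *ᵥ a = (Δ * R) *ᵥ c
  have key : ∀ Δ : Matrix (Fin m) (Fin n) ℝ, Δ *ᵥ a = (Δ * R) *ᵥ c := by
    intro Δ
    rw [hc, Matrix.mulVec_mulVec, Matrix.mul_assoc, hRRinv, Matrix.mul_one]
  -- upper bound
  have hub : ∀ x ∈ ((fun Δ => euclNorm (Δ *ᵥ a + b)) ''
      {Δ : Matrix (Fin m) (Fin n) ℝ | frobNorm (Δ * R) ≤ ρ}),
      x ≤ euclNorm b + ρ * euclNorm c := by
    rintro x ⟨Δ, hΔ, rfl⟩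
    calc euclNorm (Δ *ᵥ a + b) ≤ euclNorm (Δ *ᵥ a) + euclNorm b := euclNorm_add_le _ _
      _ = euclNorm ((Δ * R) *ᵥ c) + euclNorm b := by rw [key]
      _ ≤ frobNorm (Δ * R) * euclNorm c + euclNorm b := by
          gcongr; exact euclNorm_mulVec_le _ _
      _ ≤ ρ * euclNorm c + euclNorm b := by
          gcongr
          · exact euclNorm_nonneg _
          · exact hΔ
      _ = euclNorm b + ρ * euclNorm c := add_comm _ _
  -- witness achieving the bound
  have hwit : euclNorm b + ρ * euclNorm c ∈ ((fun Δ => euclNorm (Δ *ᵥ a + b)) ''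
      {Δ : Matrix (Fin m) (Fin n) ℝ | frobNorm (Δ * R) ≤ ρ}) := by
    by_cases hc0 : c = 0
    · refine ⟨0, ?_, ?_⟩
      · simp only [Set.mem_setOf_eq, Matrix.zero_mul]
        have : frobNorm (0 : Matrix (Fin m) (Fin n) ℝ) = 0 := by simp [frobNorm]
        rw [this]; exact le_of_lt hρ
      · simp only [Matrix.zero_mulVec, zero_add]
        rw [hc0, euclNorm_zero, mul_zero, add_zero]
    · have hcpos : 0 < euclNorm c := euclNorm_pos hc0
      obtain ⟨u, hu1, hu2⟩ := exists_unit_dir hm b (s := ρ * euclNorm c)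
        (by positivity)
      set M : Matrix (Fin m) (Fin n) ℝ := (ρ / euclNorm c) • vecMulVec u c with hM
      refine ⟨M * R⁻¹, ?_, ?_⟩
      · simp only [Set.mem_setOf_eq]
        rw [Matrix.mul_assoc, hRinvR, Matrix.mul_one, hM, frobNorm_smul,
          frobNorm_vecMulVec, hu1, one_mul, abs_of_nonneg (by positivity),
          div_mul_cancel₀ _ hcpos.ne']
      · have hMc : M *ᵥ c = (ρ * euclNorm c) • u := by
          rw [hM, Matrix.smul_mulVec]
          have : vecMulVec u c *ᵥ c = (∑ j, (c j) ^ 2) • u := by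
            funext i
            simp only [vecMulVec, Matrix.mulVec, dotProduct, Matrix.of_apply,
              Pi.smul_apply, smul_eq_mul]
            rw [Finset.sum_mul]
            exact Finset.sum_congr rfl fun j _ => by ring
          rw [this, smul_smul, ← euclNorm_sq c]
          congr 1
          field_simp
        simp only
        rw [show (M * R⁻¹) *ᵥ a = M *ᵥ c by rw [hc, Matrix.mulVec_mulVec], hMc, hu2]
  refine le_antisymm ?_ ?_
  · exact csSup_le ⟨_, hwit⟩ hub
  · exact le_csSup ⟨_, hub⟩ hwit
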